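/- The function φ₆(p,q) = p·q²/(1 + p²) + arctan(p) satisfies the equation (1 + p²)φ_pp + 2pq·φ_pq + (1 + q²)φ_qq = 0 for all real p, q. -/

import Mathlib

noncomputable def pd₁ (f : ℝ → ℝ → ℝ) : ℝ → ℝ → ℝ := fun p q => deriv (fun x => f x q) p
noncomputable def pd₂ (f : ℝ → ℝ → ℝ) : ℝ → ℝ → ℝ := fun p q => deriv (fun y => f p y) q

private lemma hne (p : ℝ) : (1 + p ^ 2) ≠ 0 := by positivity

private lemma hd_sq (p : ℝ) : HasDerivAt (fun a : ℝ => 1 + a ^ 2) (2 * p) p := by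
  simpa using (hasDerivAt_pow 2 p).const_add 1

private lemma hd_f (q p : ℝ) :
    HasDerivAt (fun a : ℝ => a * q ^ 2 / (1 + a ^ 2) + Real.arctan a)
      (q ^ 2 * (1 - p ^ 2) / (1 + p ^ 2) ^ 2 + 1 / (1 + p ^ 2)) p := by
  have h1 : HasDerivAt (fun a : ℝ => a * q ^ 2) (q ^ 2) p := by
    simpa using (hasDerivAt_id p).mul_const (q ^ 2)
  have h := (h1.div (hd_sq p) (hne p)).add (Real.hasDerivAt_arctan p)
  refine h.congr_deriv ?_
  ring

private lemma pd1_f (p q : ℝ) :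
    pd₁ (fun a b => a * b ^ 2 / (1 + a ^ 2) + Real.arctan a) p q
      = q ^ 2 * (1 - p ^ 2) / (1 + p ^ 2) ^ 2 + 1 / (1 + p ^ 2) :=
  (hd_f q p).deriv

private lemma pd2_f (p q : ℝ) :
    pd₂ (fun a b => a * b ^ 2 / (1 + a ^ 2) + Real.arctan a) p q
      = 2 * p * q / (1 + p ^ 2) := by
  have h1 : HasDerivAt (fun b : ℝ => p * b ^ 2 / (1 + p ^ 2) + Real.arctan p)
      (2 * p * q / (1 + p ^ 2)) q := by
    have h : HasDerivAt (fun b : ℝ => p * b ^ 2 / (1 + p ^ 2))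
        (p * (2 * q) / (1 + p ^ 2)) q := by
      simpa using (((hasDerivAt_pow 2 q).const_mul p).div_const (1 + p ^ 2))
    simpa [mul_comm, mul_assoc, mul_left_comm] using h.add_const (Real.arctan p)
  exact h1.deriv

private lemma hd_g1 (q p : ℝ) :
    HasDerivAt (fun x : ℝ => q ^ 2 * (1 - x ^ 2) / (1 + x ^ 2) ^ 2 + 1 / (1 + x ^ 2))
      (q ^ 2 * (2 * p ^ 3 - 6 * p) / (1 + p ^ 2) ^ 3 - 2 * p / (1 + p ^ 2) ^ 2) p := by
  have hne2 : ((1 + p ^ 2) ^ 2 : ℝ) ≠ 0 := pow_ne_zero _ (hne p)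
  have hnum : HasDerivAt (fun x : ℝ => q ^ 2 * (1 - x ^ 2)) (q ^ 2 * (-(2 * p))) p := by
    have : HasDerivAt (fun x : ℝ => 1 - x ^ 2) (-(2 * p)) p := by
      simpa using ((hasDerivAt_pow 2 p).const_sub 1)
    exact this.const_mul (q ^ 2)
  have hden : HasDerivAt (fun x : ℝ => (1 + x ^ 2) ^ 2) (2 * (1 + p ^ 2) * (2 * p)) p := by
    have := (hd_sq p)
    have h2 := this.pow 2
    exact h2.congr_deriv (by ring)
  have h1 := hnum.div hden hne2
  have h2 : HasDerivAt (fun x : ℝ => 1 / (1 + x ^ 2))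
      ((0 * (1 + p ^ 2) - 1 * (2 * p)) / (1 + p ^ 2) ^ 2) p :=
    (hasDerivAt_const p (1 : ℝ)).div (hd_sq p) (hne p)
  have h := h1.add h2
  refine h.congr_deriv ?_
  field_simp
  ring

private lemma hd_g2 (q p : ℝ) :
    HasDerivAt (fun x : ℝ => 2 * x * q / (1 + x ^ 2))
      (2 * q * (1 - p ^ 2) / (1 + p ^ 2) ^ 2) p := by
  have hnum : HasDerivAt (fun x : ℝ => 2 * x * q) (2 * q) p := by
    have : HasDerivAt (fun x : ℝ => 2 * x * q) (2 * 1 * q) p :=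
      ((hasDerivAt_id p).const_mul 2).mul_const q
    simpa using this
  have h := hnum.div (hd_sq p) (hne p)
  refine h.congr_deriv ?_
  field_simp
  ring

theorem phi_solves_legendre_eq :
    ∀ p q : ℝ,
      (1 + p ^ 2) * pd₁ (pd₁ (fun a b => a * b ^ 2 / (1 + a ^ 2) + Real.arctan a)) p q
        + 2 * p * q * pd₁ (pd₂ (fun a b => a * b ^ 2 / (1 + a ^ 2) + Real.arctan a)) p q
        + (1 + q ^ 2) * pd₂ (pd₂ (fun a b => a * b ^ 2 / (1 + a ^ 2) + Real.arctan a)) p q = 0 := by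
  intro p q
  have e11 : pd₁ (pd₁ (fun a b => a * b ^ 2 / (1 + a ^ 2) + Real.arctan a)) p q
      = q ^ 2 * (2 * p ^ 3 - 6 * p) / (1 + p ^ 2) ^ 3 - 2 * p / (1 + p ^ 2) ^ 2 := by
    have hfun : (fun x => pd₁ (fun a b => a * b ^ 2 / (1 + a ^ 2) + Real.arctan a) x q)
        = fun x => q ^ 2 * (1 - x ^ 2) / (1 + x ^ 2) ^ 2 + 1 / (1 + x ^ 2) := by
      funext x; exact pd1_f x q
    show deriv (fun x => pd₁ (fun a b => a * b ^ 2 / (1 + a ^ 2) + Real.arctan a) x q) p = _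
    rw [hfun]
    exact (hd_g1 q p).deriv
  have e12 : pd₁ (pd₂ (fun a b => a * b ^ 2 / (1 + a ^ 2) + Real.arctan a)) p q
      = 2 * q * (1 - p ^ 2) / (1 + p ^ 2) ^ 2 := by
    have hfun : (fun x => pd₂ (fun a b => a * b ^ 2 / (1 + a ^ 2) + Real.arctan a) x q)
        = fun x => 2 * x * q / (1 + x ^ 2) := by
      funext x; exact pd2_f x q
    show deriv (fun x => pd₂ (fun a b => a * b ^ 2 / (1 + a ^ 2) + Real.arctan a) x q) p = _
    rw [hfun]
    exact (hd_g2 q p).deriv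
  have e22 : pd₂ (pd₂ (fun a b => a * b ^ 2 / (1 + a ^ 2) + Real.arctan a)) p q
      = 2 * p / (1 + p ^ 2) := by
    have hfun : (fun y => pd₂ (fun a b => a * b ^ 2 / (1 + a ^ 2) + Real.arctan a) p y)
        = fun y => 2 * p * y / (1 + p ^ 2) := by
      funext y; exact pd2_f p y
    show deriv (fun y => pd₂ (fun a b => a * b ^ 2 / (1 + a ^ 2) + Real.arctan a) p y) q = _
    rw [hfun]
    have : HasDerivAt (fun y : ℝ => 2 * p * y / (1 + p ^ 2)) (2 * p / (1 + p ^ 2)) q := by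
      simpa using (((hasDerivAt_id q).const_mul (2 * p)).div_const (1 + p ^ 2))
    exact this.deriv
  rw [e11, e12, e22]
  have h1 := hne p
  field_simp
  ring
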